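/- (Expected leading principal minor under random rotation.) Let n ≥ 1, 1 ≤ k ≤ n, let λ_1,…,λ_n ≥ 0, let Λ = diag(λ_1,…,λ_n), and let V be a random matrix distributed according to the Haar probability measure on the orthogonal group O(n). Let (Vᵀ Λ V)^{(k)} denote the top-left k×k submatrix of Vᵀ Λ V. Then E[det((Vᵀ Λ V)^{(k)})] = (1/C(n,k)) · Σ_{S ⊆ {1,…,n}, |S| = k} ∏_{i ∈ S} λ_i, where C(n,k) is the binomial coefficient; i.e., the expectation equals e_k(λ_1,…,λ_n)/C(n,k), with e_k the k-th elementary symmetric polynomial. -/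

import Mathlib

open MeasureTheory Finset Matrix


/-- Borel measurable structure on the space of real matrices. -/
noncomputable instance matrixMeasurableSpace {n : ℕ} :
    MeasurableSpace (Matrix (Fin n) (Fin n) ℝ) := borel _

instance matrixBorelSpace {n : ℕ} :
    BorelSpace (Matrix (Fin n) (Fin n) ℝ) := ⟨rfl⟩

/-- expected leading principal minor under random rotation: if `V` is
Haar-distributed on the orthogonal group `O(n)` (its law `μ` being the unique
left-translation-invariant Borel probability measure) and `Λ = diag(λ)` with
`λ_i ≥ 0`, then for `1 ≤ k ≤ n`,
`E[det((VᵀΛV)^{(k)})] = e_k(λ₁,…,λ_n)/C(n,k)`, where `(·)^{(k)}` is the top-left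
`k×k` submatrix and `e_k` the `k`-th elementary symmetric polynomial. -/
instance ogBorelSpace {n : ℕ} : BorelSpace (Matrix.orthogonalGroup (Fin n) ℝ) :=
  Subtype.borelSpace _

section CB
variable {n k : ℕ}

/-- Gram-style minor: `det(CᵀC)` where `C` consists of the rows of `A` indexed by `S`. -/
noncomputable def gramMinor (A : Matrix (Fin n) (Fin k) ℝ) (S : Finset (Fin n)) : ℝ :=
  ((A.submatrix (S.orderEmbOfFin rfl) id)ᵀ * (A.submatrix (S.orderEmbOfFin rfl) id)).det

lemma gramMinor_eq_sq (A : Matrix (Fin n) (Fin k) ℝ) {S : Finset (Fin n)} (h : S.card = k) :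
    gramMinor A S = ((A.submatrix (S.orderEmbOfFin h) id).det) ^ 2 := by
  have hemb : ∀ i : Fin S.card,
      (S.orderEmbOfFin rfl) i = S.orderEmbOfFin h (Fin.cast h i) := by
    have hmono : StrictMono (fun i : Fin S.card => S.orderEmbOfFin h (Fin.cast h i)) := by
      intro a b hab
      exact (S.orderEmbOfFin h).strictMono
        (show (Fin.cast h a) < Fin.cast h b from hab)
    have := Finset.orderEmbOfFin_unique (rfl : S.card = S.card)
      (f := fun i : Fin S.card => S.orderEmbOfFin h (Fin.cast h i))
      (fun i => Finset.orderEmbOfFin_mem _ _ _) hmono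
    exact fun i => (congrFun this i).symm
  have hCB : (A.submatrix (S.orderEmbOfFin rfl) id)ᵀ * (A.submatrix (S.orderEmbOfFin rfl) id)
      = (A.submatrix (S.orderEmbOfFin h) id)ᵀ * (A.submatrix (S.orderEmbOfFin h) id) := by
    ext p q
    simp only [Matrix.mul_apply, Matrix.transpose_apply, Matrix.submatrix_apply, id]
    exact Fintype.sum_equiv (finCongr h)
      (fun i => A ((S.orderEmbOfFin rfl) i) p * A ((S.orderEmbOfFin rfl) i) q)
      (fun j => A (S.orderEmbOfFin h j) p * A (S.orderEmbOfFin h j) q)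
      (fun i => by simp only [hemb i]; rfl)
  rw [gramMinor, hCB, Matrix.det_mul, Matrix.det_transpose, sq]

/-- Cauchy–Binet for `Aᵀ D A` with `D` diagonal. -/
lemma det_conj_diagonal (A : Matrix (Fin n) (Fin k) ℝ) (lam : Fin n → ℝ) :
    (Aᵀ * Matrix.diagonal lam * A).det =
      ∑ S ∈ Finset.univ.powersetCard k, (∏ i ∈ S, lam i) * gramMinor A S := by
  classical
  -- expand determinant by multilinearity in the rows
  have hM : (Aᵀ * Matrix.diagonal lam * A) =
      Matrix.of (fun p => ∑ i : Fin n, (A i p * lam i) • (A i)) := by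
    ext p q
    simp only [Matrix.mul_apply, Matrix.transpose_apply, Matrix.diagonal_apply,
      Matrix.of_apply, Finset.sum_apply, Pi.smul_apply, smul_eq_mul]
    refine Finset.sum_congr rfl fun i _ => ?_
    rw [show (∑ x1, A x1 p * if x1 = i then lam x1 else 0) = A i p * lam i by
      simp [mul_ite]]
  have expand : (Aᵀ * Matrix.diagonal lam * A).det
      = ∑ r : Fin k → Fin n,
          (∏ p, (A (r p) p * lam (r p))) * (A.submatrix r id).det := by
    rw [hM]
    have h1 : (Matrix.of (fun p => ∑ i : Fin n, (A i p * lam i) • (A i))).det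
        = (Matrix.detRowAlternating : (Fin k → ℝ) [⋀^Fin k]→ₗ[ℝ] ℝ).toMultilinearMap
            (fun p => ∑ i : Fin n, (A i p * lam i) • (A i)) := rfl
    rw [h1, MultilinearMap.map_sum]
    refine Finset.sum_congr rfl fun r _ => ?_
    have := (Matrix.detRowAlternating :
        (Fin k → ℝ) [⋀^Fin k]→ₗ[ℝ] ℝ).toMultilinearMap.map_smul_univ
      (fun p => A (r p) p * lam (r p)) (fun p => A (r p))
    rw [this]
    rfl
  rw [expand]
  classical
  set f : (Fin k → Fin n) → ℝ :=
    fun r => (∏ p, (A (r p) p * lam (r p))) * (A.submatrix r id).det with hf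
  have hzero : ∀ r ∈ (univ : Finset (Fin k → Fin n)), f r ≠ 0 → Function.Injective r := by
    intro r _ hne
    by_contra hinj
    obtain ⟨a, b, hab, hne'⟩ := Function.not_injective_iff.mp hinj
    apply hne
    have : (A.submatrix r id).det = 0 :=
      Matrix.det_zero_of_row_eq hne' (by funext j; simp [Matrix.submatrix_apply, hab])
    simp [hf, this]
  rw [← Finset.sum_filter_of_ne hzero]
  have hmaps : ∀ r ∈ (univ : Finset (Fin k → Fin n)).filter Function.Injective,
      Finset.image r univ ∈ Finset.univ.powersetCard k := by
    intro r hr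
    rw [Finset.mem_powersetCard]
    refine ⟨Finset.subset_univ _, ?_⟩
    rw [Finset.card_image_of_injective _ (Finset.mem_filter.mp hr).2]
    simp
  rw [← Finset.sum_fiberwise_of_maps_to hmaps f]
  refine Finset.sum_congr rfl fun S hS => ?_
  obtain ⟨-, hcard⟩ := Finset.mem_powersetCard.mp hS
  set e : Fin k → Fin n := ⇑(S.orderEmbOfFin hcard) with he
  set B : Matrix (Fin k) (Fin k) ℝ := A.submatrix e id with hB
  have himg : Finset.image e univ = S := by
    apply Finset.coe_injective
    rw [Finset.coe_image, Finset.coe_univ, Set.image_univ, he,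
      Finset.range_orderEmbOfFin]
  -- bijection between the fiber and permutations
  have hin : ∀ r (_ : r ∈ ((univ : Finset (Fin k → Fin n)).filter
      Function.Injective).filter (fun r => Finset.image r univ = S)),
      ∀ p, r p ∈ S := by
    intro r hr p
    obtain ⟨hr1, hr2⟩ := Finset.mem_filter.mp hr
    rw [← hr2]
    exact Finset.mem_image_of_mem _ (Finset.mem_univ _)
  have hstep : (∑ r ∈ ((univ : Finset (Fin k → Fin n)).filter
        Function.Injective).filter (fun r => Finset.image r univ = S), f r)
      = ∑ σ : Equiv.Perm (Fin k), f (e ∘ σ) := by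
    refine Finset.sum_bij'
      (i := fun r hr => Equiv.ofBijective
        (fun p => (S.orderIsoOfFin hcard).symm ⟨r p, hin r hr p⟩)
        (Finite.injective_iff_bijective.mp (fun p₁ p₂ hpq => ?_)))
      (j := fun σ _ => e ∘ σ) ?_ ?_ ?_ ?_ ?_
    · -- injectivity used in ofBijective
      have hrinj := (Finset.mem_filter.mp (Finset.mem_filter.mp hr).1).2
      exact hrinj (congrArg Subtype.val ((S.orderIsoOfFin hcard).symm.injective hpq))
    · intro r hr; exact Finset.mem_univ _
    · -- j maps into s
      intro σ _
      rw [Finset.mem_filter, Finset.mem_filter]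
      refine ⟨⟨Finset.mem_univ _, ?_⟩, ?_⟩
      · exact ((S.orderEmbOfFin hcard).injective.comp σ.injective)
      · rw [show Finset.image (e ∘ σ) univ = Finset.image e (Finset.image ⇑σ univ) from
          (Finset.image_image ..).symm]
        rw [Finset.image_univ_of_surjective σ.surjective]
        exact himg
    · -- left inverse
      intro r hr
      funext p
      simp only [Function.comp_apply, Equiv.ofBijective_apply]
      rw [he]
      rw [← Finset.coe_orderIsoOfFin_apply, OrderIso.apply_symm_apply]
    · -- right inverse
      intro σ _
      refine Equiv.ext fun p => ?_
      simp only [Equiv.ofBijective_apply, Function.comp_apply]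
      rw [OrderIso.symm_apply_eq]
      apply Subtype.ext
      simp [he, Finset.coe_orderIsoOfFin_apply]
    · -- value
      intro r hr
      congr 1
      funext p
      simp only [Function.comp_apply, Equiv.ofBijective_apply]
      rw [he, ← Finset.coe_orderIsoOfFin_apply, OrderIso.apply_symm_apply]
  rw [hstep]
  have hterm : ∀ σ : Equiv.Perm (Fin k), f (e ∘ σ)
      = ((∏ i ∈ S, lam i) * B.det) *
          (((Equiv.Perm.sign σ : ℤ) : ℝ) * ∏ p, B (σ p) p) := by
    intro σ
    have h1 : (∏ p, (A ((e ∘ σ) p) p * lam ((e ∘ σ) p)))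
        = (∏ p, B (σ p) p) * ∏ i ∈ S, lam i := by
      rw [Finset.prod_mul_distrib]
      congr 1
      rw [← himg, Finset.prod_image (fun a _ b _ h =>
        (S.orderEmbOfFin hcard).injective h)]
      exact Equiv.prod_comp σ (fun p => lam (e p))
    have h2 : (A.submatrix (e ∘ σ) id).det
        = ((Equiv.Perm.sign σ : ℤ) : ℝ) * B.det := by
      have : A.submatrix (e ∘ σ) id = B.submatrix σ id := by
        rw [hB, Matrix.submatrix_submatrix]
        rfl
      rw [this, Matrix.det_permute]
    rw [hf]
    simp only []
    rw [h1, h2]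
    ring
  rw [Finset.sum_congr rfl (fun σ _ => hterm σ), ← Finset.mul_sum,
    ← Matrix.det_apply']
  rw [gramMinor_eq_sq A hcard, ← hB]
  ring

end CB

section Haar
variable {n k : ℕ}

/-- The squared minor functional on the orthogonal group. -/
noncomputable def FF (hkn : k ≤ n) (S : Finset (Fin n)) :
    Matrix.orthogonalGroup (Fin n) ℝ → ℝ :=
  fun V => gramMinor ((V : Matrix (Fin n) (Fin n) ℝ).submatrix id (Fin.castLE hkn)) S

lemma continuous_FF (hkn : k ≤ n) (S : Finset (Fin n)) : Continuous (FF hkn S) := by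
  have hc : Continuous (fun V : Matrix.orthogonalGroup (Fin n) ℝ =>
      (V : Matrix (Fin n) (Fin n) ℝ)) := continuous_subtype_val
  exact (((hc.matrix_submatrix id (Fin.castLE hkn)).matrix_submatrix _ _).matrix_transpose.matrix_mul
    ((hc.matrix_submatrix id (Fin.castLE hkn)).matrix_submatrix _ _)).matrix_det

lemma abs_FF_le (hkn : k ≤ n) (S : Finset (Fin n)) (V : Matrix.orthogonalGroup (Fin n) ℝ) :
    |FF hkn S V| ≤ (Nat.factorial k) * (n : ℝ) ^ k := by
  have hentry : ∀ i j, |(V : Matrix (Fin n) (Fin n) ℝ) i j| ≤ 1 := by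
    intro i j
    simpa [Real.norm_eq_abs] using entry_norm_bound_of_unitary V.2 i j
  set A := (V : Matrix (Fin n) (Fin n) ℝ).submatrix id (Fin.castLE hkn) with hA
  set C := A.submatrix (S.orderEmbOfFin rfl) id with hC
  have hb : ∀ p q, |(Cᵀ * C) p q| ≤ (n : ℝ) := by
    intro p q
    calc |(Cᵀ * C) p q| = |∑ i, C i p * C i q| := by rw [Matrix.mul_apply]; rfl
      _ ≤ ∑ i, |C i p * C i q| := Finset.abs_sum_le_sum_abs _ _
      _ ≤ ∑ _i : Fin S.card, (1 : ℝ) := by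
          refine Finset.sum_le_sum fun i _ => ?_
          rw [abs_mul]
          calc |C i p| * |C i q| ≤ 1 * 1 := by
                refine mul_le_mul ?_ ?_ (abs_nonneg _) zero_le_one
                · exact hentry _ _
                · exact hentry _ _
            _ = 1 := mul_one 1
      _ = (S.card : ℝ) := by simp
      _ ≤ (n : ℝ) := by
          exact_mod_cast (le_trans (Finset.card_le_univ S) (by simp))
  have := Matrix.det_le (A := Cᵀ * C) (abv := AbsoluteValue.abs) (x := (n : ℝ))
    (fun i j => hb i j)
  simpa [FF, gramMinor, ← hA, ← hC, Fintype.card_fin, nsmul_eq_mul] using this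

lemma integrable_FF (hkn : k ≤ n) (S : Finset (Fin n))
    (μ : Measure (Matrix.orthogonalGroup (Fin n) ℝ)) [IsProbabilityMeasure μ] :
    Integrable (FF hkn S) μ := by
  refine Integrable.mono' (integrable_const ((Nat.factorial k) * (n : ℝ) ^ k))
    (continuous_FF hkn S).aestronglyMeasurable ?_
  exact Filter.Eventually.of_forall fun V => by
    simpa [Real.norm_eq_abs] using abs_FF_le hkn S V

lemma coe_transpose_mul_self (V : Matrix.orthogonalGroup (Fin n) ℝ) :
    (V : Matrix (Fin n) (Fin n) ℝ)ᵀ * (V : Matrix (Fin n) (Fin n) ℝ) = 1 := by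
  have h := (Matrix.mem_orthogonalGroup_iff' (Fin n) ℝ).mp V.2
  exact h

lemma sum_FF (hkn : k ≤ n) (V : Matrix.orthogonalGroup (Fin n) ℝ) :
    ∑ S ∈ Finset.univ.powersetCard k, FF hkn S V = 1 := by
  have hcb := det_conj_diagonal
    ((V : Matrix (Fin n) (Fin n) ℝ).submatrix id (Fin.castLE hkn)) (fun _ => 1)
  have h2 : ((V : Matrix (Fin n) (Fin n) ℝ).submatrix id (Fin.castLE hkn))ᵀ *
      Matrix.diagonal (fun _ : Fin n => (1:ℝ)) *
      ((V : Matrix (Fin n) (Fin n) ℝ).submatrix id (Fin.castLE hkn)) = 1 := by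
    rw [Matrix.diagonal_one, Matrix.mul_one, Matrix.transpose_submatrix,
      ← Matrix.submatrix_mul _ _ _ id _ Function.bijective_id,
      coe_transpose_mul_self]
    exact Matrix.submatrix_one _ (Fin.castLE_injective hkn)
  rw [h2, Matrix.det_one] at hcb
  simp only [Finset.prod_const_one, one_mul] at hcb
  simp only [FF]
  exact hcb.symm

lemma integral_FF_congr (hkn : k ≤ n)
    (μ : Measure (Matrix.orthogonalGroup (Fin n) ℝ)) [IsProbabilityMeasure μ]
    (hinv : ∀ g : Matrix.orthogonalGroup (Fin n) ℝ,
      Measure.map (fun x => g * x) μ = μ)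
    {S T : Finset (Fin n)} (hS : S.card = k) (hT : T.card = k) :
    ∫ V, FF hkn S V ∂μ = ∫ V, FF hkn T V ∂μ := by
  classical
  -- build a permutation sending T to S compatibly with the orderings
  set eST : {x // x ∈ T} ≃ {x // x ∈ S} :=
    ((T.orderIsoOfFin hT).toEquiv.symm.trans (S.orderIsoOfFin hS).toEquiv) with heST
  have hcard' : Fintype.card {x : Fin n // ¬ x ∈ T} = Fintype.card {x : Fin n // ¬ x ∈ S} := by
    rw [Fintype.card_subtype_compl, Fintype.card_subtype_compl]
    congr 1
    simp [Fintype.card_coe, hS, hT]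
  set fST : {x : Fin n // ¬ x ∈ T} ≃ {x : Fin n // ¬ x ∈ S} :=
    Fintype.equivOfCardEq hcard' with hfST
  set σ : Equiv.Perm (Fin n) := Equiv.subtypeCongr eST fST with hσ
  have hσT : ∀ i : Fin k, σ (T.orderEmbOfFin hT i) = S.orderEmbOfFin hS i := by
    intro i
    have hmem : (T.orderEmbOfFin hT i) ∈ T := Finset.orderEmbOfFin_mem _ _ _
    have h1 : σ (T.orderEmbOfFin hT i) = (eST ⟨T.orderEmbOfFin hT i, hmem⟩ : Fin n) := by
      simp only [hσ, Equiv.subtypeCongr, Equiv.trans_apply,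
        Equiv.sumCompl_symm_apply_of_pos hmem, Equiv.sumCongr_apply, Sum.map_inl,
        Equiv.sumCompl_apply_inl]
    rw [h1, heST]
    have h2 : (T.orderIsoOfFin hT).toEquiv.symm ⟨T.orderEmbOfFin hT i, hmem⟩ = i := by
      rw [Equiv.symm_apply_eq]
      apply Subtype.ext
      simp [Finset.coe_orderIsoOfFin_apply]
    simp only [Equiv.trans_apply, h2]
    simp [Finset.coe_orderIsoOfFin_apply]
  -- the permutation matrix as an element of the orthogonal group
  have hmemg : (σ.toPEquiv.toMatrix : Matrix (Fin n) (Fin n) ℝ) ∈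
      Matrix.orthogonalGroup (Fin n) ℝ := by
    rw [Matrix.mem_orthogonalGroup_iff]
    rw [← PEquiv.toMatrix_symm, ← Equiv.toPEquiv_symm, ← PEquiv.toMatrix_trans,
      ← Equiv.toPEquiv_trans]
    simp
  set g : Matrix.orthogonalGroup (Fin n) ℝ := ⟨σ.toPEquiv.toMatrix, hmemg⟩ with hg
  have hcoe : ∀ x : Matrix.orthogonalGroup (Fin n) ℝ,
      ((g * x : Matrix.orthogonalGroup (Fin n) ℝ) : Matrix (Fin n) (Fin n) ℝ)
        = σ.toPEquiv.toMatrix * (x : Matrix (Fin n) (Fin n) ℝ) := fun x => rfl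
  have hmul_cont : Continuous (fun x : Matrix.orthogonalGroup (Fin n) ℝ => g * x) := by
    apply Continuous.subtype_mk
      (continuous_const.matrix_mul continuous_subtype_val :
        Continuous fun x : Matrix.orthogonalGroup (Fin n) ℝ =>
          (g : Matrix (Fin n) (Fin n) ℝ) * (x : Matrix (Fin n) (Fin n) ℝ))
  have hpt : ∀ x, FF hkn T (g * x) = FF hkn S x := by
    intro x
    rw [FF, FF, gramMinor_eq_sq _ hT, gramMinor_eq_sq _ hS]
    congr 2
    rw [hcoe x, PEquiv.toMatrix_toPEquiv_mul]
    rw [Matrix.submatrix_submatrix, Matrix.submatrix_submatrix, Matrix.submatrix_submatrix]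
    have hfun : ∀ i, (⇑σ ∘ id ∘ ⇑(T.orderEmbOfFin hT)) i = (id ∘ ⇑(S.orderEmbOfFin hS)) i :=
      fun i => hσT i
    rw [funext hfun]
    rfl
  calc ∫ V, FF hkn S V ∂μ = ∫ V, FF hkn T (g * V) ∂μ := by
        simp_rw [hpt]
    _ = ∫ V, FF hkn T V ∂(Measure.map (fun x => g * x) μ) := by
        rw [integral_map hmul_cont.aemeasurable ((continuous_FF hkn T).aestronglyMeasurable)]
    _ = ∫ V, FF hkn T V ∂μ := by rw [hinv g]

end Haar

theorem expected_principal_minor_haar {n k : ℕ} (hn : 1 ≤ n) (hk1 : 1 ≤ k)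
    (hkn : k ≤ n)
    (lam : Fin n → ℝ) (hlam : ∀ i, 0 ≤ lam i)
    (μ : Measure (Matrix.orthogonalGroup (Fin n) ℝ)) [IsProbabilityMeasure μ]
    (hinv : ∀ g : Matrix.orthogonalGroup (Fin n) ℝ,
      Measure.map (fun x => g * x) μ = μ) :
    ∫ V : Matrix.orthogonalGroup (Fin n) ℝ,
        (((V : Matrix (Fin n) (Fin n) ℝ).transpose * Matrix.diagonal lam *
            (V : Matrix (Fin n) (Fin n) ℝ)).submatrix
          (Fin.castLE hkn) (Fin.castLE hkn)).det ∂μ =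
      (1 / (n.choose k : ℝ)) *
        ∑ S ∈ Finset.univ.powersetCard k, ∏ i ∈ S, lam i := by
  classical
  have hpt : ∀ V : Matrix.orthogonalGroup (Fin n) ℝ,
      (((V : Matrix (Fin n) (Fin n) ℝ).transpose * Matrix.diagonal lam *
          (V : Matrix (Fin n) (Fin n) ℝ)).submatrix
        (Fin.castLE hkn) (Fin.castLE hkn)).det
      = ∑ S ∈ Finset.univ.powersetCard k, (∏ i ∈ S, lam i) * FF hkn S V := by
    intro V
    have hsub : ((V : Matrix (Fin n) (Fin n) ℝ)ᵀ * Matrix.diagonal lam *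
          (V : Matrix (Fin n) (Fin n) ℝ)).submatrix (Fin.castLE hkn) (Fin.castLE hkn)
        = ((V : Matrix (Fin n) (Fin n) ℝ).submatrix id (Fin.castLE hkn))ᵀ *
            Matrix.diagonal lam *
          ((V : Matrix (Fin n) (Fin n) ℝ).submatrix id (Fin.castLE hkn)) := by
      rw [Matrix.submatrix_mul _ _ _ id _ Function.bijective_id,
        Matrix.submatrix_mul _ _ _ id _ Function.bijective_id,
        Matrix.submatrix_id_id, ← Matrix.transpose_submatrix]
    rw [hsub, det_conj_diagonal]
    rfl
  rw [MeasureTheory.integral_congr_ae (Filter.Eventually.of_forall hpt)]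
  rw [MeasureTheory.integral_finset_sum _
    (fun S _ => ((integrable_FF hkn S μ).const_mul _))]
  obtain ⟨S₀, hS₀⟩ := Finset.powersetCard_nonempty.mpr
    (by simpa using hkn : k ≤ (Finset.univ : Finset (Fin n)).card)
  have hS₀c : S₀.card = k := (Finset.mem_powersetCard.mp hS₀).2
  have hconst : ∀ S ∈ Finset.univ.powersetCard k,
      ∫ V, FF hkn S V ∂μ = ∫ V, FF hkn S₀ V ∂μ := fun S hS =>
    integral_FF_congr hkn μ hinv (Finset.mem_powersetCard.mp hS).2 hS₀c
  have hchoose : (n.choose k : ℝ) ≠ 0 := by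
    exact_mod_cast (Nat.choose_pos hkn).ne'
  have hsum1 : (n.choose k : ℝ) * ∫ V, FF hkn S₀ V ∂μ = 1 := by
    have h1 : ∑ S ∈ Finset.univ.powersetCard k, ∫ V, FF hkn S V ∂μ = 1 := by
      rw [← MeasureTheory.integral_finset_sum _ (fun S _ => integrable_FF hkn S μ)]
      simp_rw [sum_FF hkn]
      simp
    rw [← h1, Finset.sum_congr rfl hconst, Finset.sum_const, nsmul_eq_mul]
    congr 2
    rw [Finset.card_powersetCard]
    simp
  have hc : ∫ V, FF hkn S₀ V ∂μ = 1 / (n.choose k : ℝ) := by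
    field_simp
    linarith [hsum1]
  calc ∑ S ∈ Finset.univ.powersetCard k, ∫ V, (∏ i ∈ S, lam i) * FF hkn S V ∂μ
      = ∑ S ∈ Finset.univ.powersetCard k,
          (∏ i ∈ S, lam i) * (1 / (n.choose k : ℝ)) := by
        refine Finset.sum_congr rfl fun S hS => ?_
        rw [integral_const_mul, hconst S hS, hc]
    _ = (1 / (n.choose k : ℝ)) * ∑ S ∈ Finset.univ.powersetCard k, ∏ i ∈ S, lam i := by
        rw [← Finset.sum_mul]
        ring
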